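/- arXiv:2105.12158 — 2 statements merged into one kernel-verified Lean document; each statement's English description precedes it below -/
import Mathlib

section
/- Explicit oscillating solution of the regularized adhesive beam problem: Let L > 0 and ε ∈ (0,1), and define Φ_ε : ℝ → ℝ by Φ_ε(s) = ((2−ε)/2)s² for |s| ≤ 1, Φ_ε(s) = ((2−ε)/ε)((1+ε)(s−1/2) − s²/2) for 1 ≤ s ≤ 1+ε, Φ_ε(s) = ((ε−2)/ε)((1+ε)(s+1/2) + s²/2) for −1−ε ≤ s ≤ −1, and Φ_ε(s) = (2−ε)(1+ε)/2 for |s| ≥ 1+ε. Then Φ_ε is continuously differentiable with Φ_ε'(s) = (2−ε)s for |s| ≤ 1, Φ_ε'(s) = ((2−ε)/ε)(1+ε−s) for 1 ≤ s ≤ 1+ε, Φ_ε'(s) = ((ε−2)/ε)(1+ε+s) for −1−ε ≤ s ≤ −1, and Φ_ε'(s) = 0 for |s| ≥ 1+ε; and the function u_ε(t,x) = (1−ε)·cos(√(2−ε)·t) satisfies, with ρ = μ = 1: ∂²_t u_ε(t,x) = −∂⁴ₓu_ε(t,x) − Φ_ε'(u_ε(t,x)) for all t > 0 and 0 < x < L;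 the boundary conditions ∂²ₓu_ε(t,0) = ∂²ₓu_ε(t,L) = ∂³ₓu_ε(t,0) = ∂³ₓu_ε(t,L) = 0; the initial conditions u_ε(0,x) = 1−ε and ∂_t u_ε(0,x) = 0; and its energy ∫₀^L (((∂_t u_ε(t,x))² + (∂²ₓu_ε(t,x))²)/2 + Φ_ε(u_ε(t,x))) dx equals (2−ε)(1−ε)²L/2 for every t ≥ 0. -/
open MeasureTheory Filter Set intervalIntegral Real

/-- The regularized adhesive potential `Φ_ε`. -/
noncomputable def PhiEps (ε s : ℝ) : ℝ :=
  if |s| ≤ 1 then ((2 - ε) / 2) * s ^ 2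
  else if 1 ≤ s ∧ s ≤ 1 + ε then ((2 - ε) / ε) * ((1 + ε) * (s - 1 / 2) - s ^ 2 / 2)
  else if -1 - ε ≤ s ∧ s ≤ -1 then ((ε - 2) / ε) * ((1 + ε) * (s + 1 / 2) + s ^ 2 / 2)
  else (2 - ε) * (1 + ε) / 2

/-- The derivative `Φ_ε'` of the regularized adhesive potential. -/
noncomputable def PhiEps' (ε s : ℝ) : ℝ :=
  if |s| ≤ 1 then (2 - ε) * s
  else if 1 ≤ s ∧ s ≤ 1 + ε then ((2 - ε) / ε) * (1 + ε - s)
  else if -1 - ε ≤ s ∧ s ≤ -1 then ((ε - 2) / ε) * (1 + ε + s)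
  else 0

private lemma HasDerivAt.congr_d {f : ℝ → ℝ} {d d' x : ℝ}
    (h : HasDerivAt f d x) (hd : d = d') : HasDerivAt f d' x := hd ▸ h

private lemma hd_congr_on {f g : ℝ → ℝ} {d s : ℝ} {S : Set ℝ}
    (hS : S ∈ nhds s) (heq : ∀ x ∈ S, f x = g x)
    (hg : HasDerivAt g d s) : HasDerivAt f d s := by
  have hs : s ∈ S := mem_of_mem_nhds hS
  exact ((hg.hasDerivWithinAt (s := S)).congr heq (heq s hs)).hasDerivAt hS

private lemma hd_union {f g₁ g₂ : ℝ → ℝ} {d s : ℝ} {S₁ S₂ : Set ℝ}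
    (hS : S₁ ∪ S₂ ∈ nhds s) (hs1 : s ∈ S₁) (hs2 : s ∈ S₂)
    (h1 : ∀ x ∈ S₁, f x = g₁ x) (h2 : ∀ x ∈ S₂, f x = g₂ x)
    (hg1 : HasDerivAt g₁ d s) (hg2 : HasDerivAt g₂ d s) : HasDerivAt f d s :=
  (((hg1.hasDerivWithinAt).congr h1 (h1 s hs1)).union
    ((hg2.hasDerivWithinAt).congr h2 (h2 s hs2))).hasDerivAt hS

section pieces
set_option linter.unusedSectionVars false
variable {ε : ℝ} (hε : ε ∈ Set.Ioo (0:ℝ) 1)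
include hε

private lemma phi_eq0 : ∀ s ∈ Icc (-1:ℝ) 1, PhiEps ε s = ((2-ε)/2) * s^2 := by
  intro s hs; rw [PhiEps, if_pos (abs_le.2 ⟨hs.1, hs.2⟩)]

private lemma phi_eqP : ∀ s ∈ Icc (1:ℝ) (1+ε),
    PhiEps ε s = ((2-ε)/ε) * ((1+ε) * (s - 1/2) - s^2/2) := by
  intro s hs
  have hε0 := hε.1
  rw [PhiEps]
  split_ifs with h1 h2 h3
  · have : s = 1 := le_antisymm (abs_le.1 h1).2 hs.1
    subst this; field_simp; ring
  · rfl
  · exact absurd ⟨hs.1, hs.2⟩ h2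
  · exact absurd ⟨hs.1, hs.2⟩ h2

private lemma phi_eqM : ∀ s ∈ Icc (-1-ε) (-1:ℝ),
    PhiEps ε s = ((ε-2)/ε) * ((1+ε) * (s + 1/2) + s^2/2) := by
  intro s hs
  have hε0 := hε.1
  rw [PhiEps]
  split_ifs with h1 h2 h3
  · have : s = -1 := le_antisymm hs.2 (abs_le.1 h1).1
    subst this; field_simp; ring
  · exact absurd h2.1 (by linarith [hs.2])
  · rfl
  · exact absurd ⟨hs.1, hs.2⟩ h3

private lemma phi_eqCP : ∀ s ∈ Ici (1+ε),
    PhiEps ε s = (2-ε) * (1+ε) / 2 := by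
  intro s hs
  have hε0 := hε.1
  simp only [mem_Ici] at hs
  rw [PhiEps]
  split_ifs with h1 h2 h3
  · exact absurd (abs_le.1 h1).2 (by linarith)
  · have : s = 1 + ε := le_antisymm h2.2 hs
    subst this; field_simp; ring
  · exact absurd h3.2 (by linarith)
  · rfl

private lemma phi_eqCM : ∀ s ∈ Iic (-1-ε),
    PhiEps ε s = (2-ε) * (1+ε) / 2 := by
  intro s hs
  have hε0 := hε.1
  simp only [mem_Iic] at hs
  rw [PhiEps]
  split_ifs with h1 h2 h3
  · exact absurd (abs_le.1 h1).1 (by linarith)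
  · exact absurd h2.1 (by linarith)
  · have : s = -1 - ε := le_antisymm hs h3.1
    subst this; field_simp; ring
  · rfl

private lemma phi'_val0 {s : ℝ} (h : |s| ≤ 1) : PhiEps' ε s = (2-ε) * s := by
  rw [PhiEps', if_pos h]

end pieces

section derivs
variable {ε : ℝ}

private lemma hd0 (s : ℝ) : HasDerivAt (fun x : ℝ => ((2-ε)/2) * x^2) ((2-ε) * s) s :=
  ((hasDerivAt_pow 2 s).const_mul ((2-ε)/2)).congr_d (by push_cast; ring)

private lemma hdP (s : ℝ) : HasDerivAt (fun x : ℝ => ((2-ε)/ε) * ((1+ε) * (x - 1/2) - x^2/2))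
    (((2-ε)/ε) * (1+ε-s)) s := by
  have h1 : HasDerivAt (fun x : ℝ => (1+ε) * (x - 1/2) - x^2/2) (1+ε-s) s :=
    ((((hasDerivAt_id s).sub_const (1/2)).const_mul (1+ε)).sub
      ((hasDerivAt_pow 2 s).div_const 2)).congr_d (by push_cast; ring)
  exact h1.const_mul ((2-ε)/ε)

private lemma hdM (s : ℝ) : HasDerivAt (fun x : ℝ => ((ε-2)/ε) * ((1+ε) * (x + 1/2) + x^2/2))
    (((ε-2)/ε) * (1+ε+s)) s := by
  have h1 : HasDerivAt (fun x : ℝ => (1+ε) * (x + 1/2) + x^2/2) (1+ε+s) s :=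
    ((((hasDerivAt_id s).add_const (1/2)).const_mul (1+ε)).add
      ((hasDerivAt_pow 2 s).div_const 2)).congr_d (by push_cast; ring)
  exact h1.const_mul ((ε-2)/ε)

end derivs

private lemma phi_hasDerivAt {ε : ℝ} (hε : ε ∈ Set.Ioo (0:ℝ) 1) (s : ℝ) :
    HasDerivAt (PhiEps ε) (PhiEps' ε s) s := by
  obtain ⟨hε0, hε1⟩ := hε
  have hεne : ε ≠ 0 := ne_of_gt hε0
  rcases lt_trichotomy s (-1-ε) with h | h | h
  · -- s < -1-ε : constant
    have hval : PhiEps' ε s = 0 := by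
      rw [PhiEps']
      split_ifs with h1 h2 h3
      · exact absurd (abs_le.1 h1).1 (by linarith)
      · exact absurd h2.1 (by linarith)
      · exact absurd h3.1 (by linarith)
      · rfl
    rw [hval]
    exact hd_congr_on (Iic_mem_nhds h) (phi_eqCM ⟨hε0, hε1⟩) (hasDerivAt_const _ _)
  · -- s = -1-ε
    subst h
    have hval : PhiEps' ε (-1-ε) = 0 := by
      rw [PhiEps']
      split_ifs with h1 h2 h3
      · exact absurd (abs_le.1 h1).1 (by linarith)
      · exact absurd h2.1 (by linarith)
      · ring
      · rfl
    rw [hval]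
    refine hd_union (S₁ := Iic (-1-ε)) (S₂ := Icc (-1-ε) (-1)) ?_ self_mem_Iic
      ⟨le_refl _, by linarith⟩ (phi_eqCM ⟨hε0, hε1⟩) (phi_eqM ⟨hε0, hε1⟩)
      (hasDerivAt_const _ _) ((hdM _).congr_d (by ring))
    rw [Iic_union_Icc_eq_Iic (by linarith)]
    exact Iic_mem_nhds (by linarith)
  · rcases lt_trichotomy s (-1) with h2 | h2 | h2
    · -- -1-ε < s < -1
      have hval : PhiEps' ε s = ((ε-2)/ε) * (1+ε+s) := by
        rw [PhiEps']
        split_ifs with h1 h3 h4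
        · exact absurd (abs_le.1 h1).1 (by linarith)
        · exact absurd h3.1 (by linarith)
        · rfl
        · exact absurd ⟨le_of_lt h, le_of_lt h2⟩ h4
      rw [hval]
      exact hd_congr_on (Icc_mem_nhds h h2) (phi_eqM ⟨hε0, hε1⟩) (hdM s)
    · -- s = -1
      subst h2
      have hval : PhiEps' ε (-1) = (2-ε) * (-1) := by
        rw [PhiEps', if_pos (by rw [abs_of_nonpos (by norm_num)]; norm_num)]
      rw [hval]
      refine hd_union (S₁ := Icc (-1-ε) (-1)) (S₂ := Icc (-1) 1) ?_
        ⟨by linarith, le_refl _⟩ ⟨le_refl _, by norm_num⟩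
        (phi_eqM ⟨hε0, hε1⟩) (phi_eq0 ⟨hε0, hε1⟩)
        ((hdM _).congr_d (by field_simp; ring)) (hd0 (-1))
      rw [Icc_union_Icc_eq_Icc (by linarith) (by norm_num)]
      exact Icc_mem_nhds (by linarith) (by norm_num)
    · rcases lt_trichotomy s 1 with h3 | h3 | h3
      · -- -1 < s < 1
        have hval : PhiEps' ε s = (2-ε) * s := by
          rw [PhiEps', if_pos (abs_le.2 ⟨le_of_lt h2, le_of_lt h3⟩)]
        rw [hval]
        exact hd_congr_on (Icc_mem_nhds h2 h3) (phi_eq0 ⟨hε0, hε1⟩) (hd0 s)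
      · -- s = 1
        subst h3
        have hval : PhiEps' ε 1 = (2-ε) * 1 := by
          rw [PhiEps', if_pos (by norm_num)]
        rw [hval]
        refine hd_union (S₁ := Icc (-1) 1) (S₂ := Icc 1 (1+ε)) ?_
          ⟨by norm_num, le_refl _⟩ ⟨le_refl _, by linarith⟩
          (phi_eq0 ⟨hε0, hε1⟩) (phi_eqP ⟨hε0, hε1⟩) (hd0 1)
          ((hdP _).congr_d (by field_simp; ring))
        rw [Icc_union_Icc_eq_Icc (by norm_num) (by linarith)]
        exact Icc_mem_nhds (by norm_num) (by linarith)
      · rcases lt_trichotomy s (1+ε) with h4 | h4 | h4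
        · -- 1 < s < 1+ε
          have hval : PhiEps' ε s = ((2-ε)/ε) * (1+ε-s) := by
            rw [PhiEps']
            split_ifs with h1 h5 h6
            · exact absurd (abs_le.1 h1).2 (by linarith)
            · rfl
            · exact absurd ⟨le_of_lt h3, le_of_lt h4⟩ h5
            · exact absurd ⟨le_of_lt h3, le_of_lt h4⟩ h5
          rw [hval]
          exact hd_congr_on (Icc_mem_nhds h3 h4) (phi_eqP ⟨hε0, hε1⟩) (hdP s)
        · -- s = 1+ε
          subst h4
          have hval : PhiEps' ε (1+ε) = 0 := by
            rw [PhiEps']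
            split_ifs with h1 h5 h6
            · exact absurd (abs_le.1 h1).2 (by linarith)
            · ring
            · exact absurd h6.2 (by linarith)
            · rfl
          rw [hval]
          refine hd_union (S₁ := Icc 1 (1+ε)) (S₂ := Ici (1+ε)) ?_
            ⟨by linarith, le_refl _⟩ self_mem_Ici
            (phi_eqP ⟨hε0, hε1⟩) (phi_eqCP ⟨hε0, hε1⟩)
            ((hdP _).congr_d (by ring)) (hasDerivAt_const _ _)
          rw [Icc_union_Ici_eq_Ici (by linarith)]
          exact Ici_mem_nhds (by linarith)
        · -- s > 1+ε
          have hval : PhiEps' ε s = 0 := by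
            rw [PhiEps']
            split_ifs with h1 h5 h6
            · exact absurd (abs_le.1 h1).2 (by linarith)
            · exact absurd h5.2 (by linarith)
            · exact absurd h6.2 (by linarith)
            · rfl
          rw [hval]
          exact hd_congr_on (Ici_mem_nhds h4) (phi_eqCP ⟨hε0, hε1⟩) (hasDerivAt_const _ _)

private lemma phi'_closed {ε : ℝ} (hε : ε ∈ Set.Ioo (0:ℝ) 1) :
    PhiEps' ε = fun s => ((2-ε)/ε) *
      (max 0 (min (ε*s) (1+ε-s)) - max 0 (min (-(ε*s)) (1+ε+s))) := by
  obtain ⟨hε0, hε1⟩ := hε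
  have hεne : ε ≠ 0 := ne_of_gt hε0
  funext s
  rw [PhiEps']
  split_ifs with h1 h2 h3
  · obtain ⟨hm, hM⟩ := abs_le.1 h1
    rcases le_total 0 s with hs | hs
    · have e1 : min (ε*s) (1+ε-s) = ε*s := by
        apply min_eq_left; nlinarith [mul_le_mul_of_nonneg_left hM hε0.le]
      have e2 : max 0 (ε*s) = ε*s := max_eq_right (mul_nonneg hε0.le hs)
      have e3 : min (-(ε*s)) (1+ε+s) = -(ε*s) := by
        apply min_eq_left; nlinarith [mul_nonneg hε0.le hs]
      have e4 : max 0 (-(ε*s)) = 0 := by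
        apply max_eq_left; nlinarith [mul_nonneg hε0.le hs]
      rw [e1, e2, e3, e4]
      field_simp
      ring
    · have h1s : (0:ℝ) ≤ 1 + s := by linarith
      have h1e : (0:ℝ) ≤ 1 + ε := by linarith
      have hsn : ε * s ≤ 0 := mul_nonpos_of_nonneg_of_nonpos hε0.le hs
      have e1 : min (ε*s) (1+ε-s) = ε*s := by apply min_eq_left; nlinarith
      have e2 : max 0 (ε*s) = 0 := max_eq_left hsn
      have e3 : min (-(ε*s)) (1+ε+s) = -(ε*s) := by
        apply min_eq_left; nlinarith [mul_nonneg h1s h1e]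
      have e4 : max 0 (-(ε*s)) = -(ε*s) := max_eq_right (by linarith)
      rw [e1, e2, e3, e4]
      field_simp
      ring
  · obtain ⟨hm, hM⟩ := h2
    have hes : ε * 1 ≤ ε * s := mul_le_mul_of_nonneg_left hm hε0.le
    have e1 : min (ε*s) (1+ε-s) = 1+ε-s := by apply min_eq_right; nlinarith
    have e2 : max 0 (1+ε-s) = 1+ε-s := max_eq_right (by linarith)
    have e3 : min (-(ε*s)) (1+ε+s) = -(ε*s) := by apply min_eq_left; nlinarith
    have e4 : max 0 (-(ε*s)) = 0 := by apply max_eq_left; nlinarith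
    rw [e1, e2, e3, e4]
    ring
  · obtain ⟨hm, hM⟩ := h3
    have hes : ε * s ≤ ε * (-1) := mul_le_mul_of_nonneg_left hM hε0.le
    have hprod : (1+s) * (1+ε) ≤ 0 :=
      mul_nonpos_of_nonpos_of_nonneg (by linarith) (by linarith)
    have e1 : min (ε*s) (1+ε-s) = ε*s := by apply min_eq_left; nlinarith
    have e2 : max 0 (ε*s) = 0 := by apply max_eq_left; nlinarith
    have e3 : min (-(ε*s)) (1+ε+s) = 1+ε+s := by apply min_eq_right; nlinarith
    have e4 : max 0 (1+ε+s) = 1+ε+s := max_eq_right (by linarith)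
    rw [e1, e2, e3, e4]
    ring
  · rcases (lt_abs.1 (not_le.1 h1)) with hgt | hgt
    · have hs : 1 + ε < s := by
        by_contra hcon
        push_neg at hcon
        exact h2 ⟨le_of_lt hgt, hcon⟩
      have hes : ε * 1 ≤ ε * s := mul_le_mul_of_nonneg_left (by linarith) hε0.le
      have e1 : min (ε*s) (1+ε-s) = 1+ε-s := by apply min_eq_right; nlinarith
      have e2 : max 0 (1+ε-s) = 0 := max_eq_left (by linarith)
      have e3 : min (-(ε*s)) (1+ε+s) = -(ε*s) := by apply min_eq_left; nlinarith
      have e4 : max 0 (-(ε*s)) = 0 := by apply max_eq_left; nlinarith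
      rw [e1, e2, e3, e4]
      ring
    · have hs1 : s < -1 := by linarith
      have hs : s < -1 - ε := by
        by_contra hcon
        push_neg at hcon
        exact h3 ⟨hcon, le_of_lt hs1⟩
      have hes : ε * s ≤ ε * (-1) := mul_le_mul_of_nonneg_left (by linarith) hε0.le
      have e1 : min (ε*s) (1+ε-s) = ε*s := by apply min_eq_left; nlinarith
      have e2 : max 0 (ε*s) = 0 := by apply max_eq_left; nlinarith
      have e3 : min (-(ε*s)) (1+ε+s) = 1+ε+s := by apply min_eq_right; nlinarith
      have e4 : max 0 (1+ε+s) = 0 := max_eq_left (by linarith)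
      rw [e1, e2, e3, e4]
      ring

/-- **Explicit oscillating solution of the regularized adhesive beam problem.**
`Φ_ε` is `C¹` with derivative `Φ_ε'`, and `u_ε(t,x) = (1-ε) cos(√(2-ε) t)` solves the
regularized beam problem with `ρ = μ = 1`, free-end boundary conditions, initial data
`(1-ε, 0)`, and has constant energy `(2-ε)(1-ε)² L / 2`. -/
theorem oscillating_solution_regularized
    (L ε : ℝ) (hL : 0 < L) (hε : ε ∈ Ioo (0:ℝ) 1)
    (uε : ℝ → ℝ → ℝ)
    (huε : ∀ t x, uε t x = (1 - ε) * Real.cos (Real.sqrt (2 - ε) * t)) :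
    -- Φ_ε is continuously differentiable with derivative Φ_ε'
    (∀ s, HasDerivAt (PhiEps ε) (PhiEps' ε s) s) ∧
    Continuous (PhiEps' ε) ∧
    -- the PDE ∂ₜ²u_ε = -∂ₓ⁴u_ε - Φ_ε'(u_ε) on (0,∞) × (0,L)
    (∀ t ∈ Ioi (0:ℝ), ∀ x ∈ Ioo 0 L,
      deriv (deriv (fun τ => uε τ x)) t
        = -(iteratedDeriv 4 (fun y => uε t y) x) - PhiEps' ε (uε t x)) ∧
    -- free-end boundary conditions
    (∀ t ∈ Ioi (0:ℝ),
      iteratedDeriv 2 (fun y => uε t y) 0 = 0 ∧ iteratedDeriv 2 (fun y => uε t y) L = 0 ∧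
      iteratedDeriv 3 (fun y => uε t y) 0 = 0 ∧ iteratedDeriv 3 (fun y => uε t y) L = 0) ∧
    -- initial conditions
    (∀ x ∈ Ioo 0 L, uε 0 x = 1 - ε ∧ deriv (fun τ => uε τ x) 0 = 0) ∧
    -- constant energy
    (∀ t ∈ Ici (0:ℝ),
      (∫ x in (0:ℝ)..L,
          (((deriv (fun τ => uε τ x) t) ^ 2 + (iteratedDeriv 2 (fun y => uε t y) x) ^ 2) / 2
            + PhiEps ε (uε t x)))
        = (2 - ε) * (1 - ε) ^ 2 * L / 2) := by
  obtain ⟨hε0, hε1⟩ := hε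
  have hc : (0:ℝ) < 2 - ε := by linarith
  have hsq : Real.sqrt (2-ε) * Real.sqrt (2-ε) = 2 - ε := Real.mul_self_sqrt (by linarith)
  have hdt1 : ∀ τ : ℝ, HasDerivAt (fun τ => (1-ε) * Real.cos (Real.sqrt (2-ε) * τ))
      (-((1-ε) * Real.sqrt (2-ε) * Real.sin (Real.sqrt (2-ε) * τ))) τ := by
    intro τ
    have h1 : HasDerivAt (fun τ : ℝ => Real.sqrt (2-ε) * τ) (Real.sqrt (2-ε)) τ := by
      simpa using (hasDerivAt_id τ).const_mul (Real.sqrt (2-ε))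
    exact (((Real.hasDerivAt_cos (Real.sqrt (2-ε) * τ)).comp τ h1).const_mul
      (1-ε)).congr_d (by ring)
  have hderiv1 : ∀ x : ℝ, deriv (fun τ => uε τ x)
      = fun τ => -((1-ε) * Real.sqrt (2-ε) * Real.sin (Real.sqrt (2-ε) * τ)) := by
    intro x
    funext τ
    simp only [huε]
    exact (hdt1 τ).deriv
  have hdt2 : ∀ τ : ℝ, HasDerivAt
      (fun τ => -((1-ε) * Real.sqrt (2-ε) * Real.sin (Real.sqrt (2-ε) * τ)))
      (-((1-ε) * (2-ε) * Real.cos (Real.sqrt (2-ε) * τ))) τ := by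
    intro τ
    have h1 : HasDerivAt (fun τ : ℝ => Real.sqrt (2-ε) * τ) (Real.sqrt (2-ε)) τ := by
      simpa using (hasDerivAt_id τ).const_mul (Real.sqrt (2-ε))
    exact ((((Real.hasDerivAt_sin (Real.sqrt (2-ε) * τ)).comp τ h1).const_mul
      ((1-ε) * Real.sqrt (2-ε))).neg).congr_d
      (by linear_combination (-((1-ε) * Real.cos (Real.sqrt (2-ε) * τ))) * hsq)
  have hspatial : ∀ (t : ℝ) (n : ℕ), 1 ≤ n →
      iteratedDeriv n (fun y => uε t y) = fun _ => 0 := by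
    intro t n hn
    have hconst : (fun y => uε t y) = fun _ : ℝ => (1-ε) * Real.cos (Real.sqrt (2-ε) * t) := by
      funext y; exact huε t y
    rw [hconst]
    induction n with
    | zero => omega
    | succ m ih =>
      rcases Nat.eq_or_lt_of_le hn with h | h
      · rw [← h]
        simp [iteratedDeriv_succ, iteratedDeriv_zero]
      · rw [iteratedDeriv_succ, ih (by omega)]
        simp
  have habs : ∀ θ : ℝ, |(1-ε) * Real.cos θ| ≤ 1 := by
    intro θ
    rw [abs_mul, abs_of_nonneg (by linarith : (0:ℝ) ≤ 1-ε)]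
    nlinarith [Real.abs_cos_le_one θ, abs_nonneg (Real.cos θ)]
  refine ⟨phi_hasDerivAt ⟨hε0, hε1⟩, ?_, ?_, ?_, ?_, ?_⟩
  · -- continuity
    rw [phi'_closed ⟨hε0, hε1⟩]
    fun_prop
  · -- PDE
    intro t _ x _
    rw [hderiv1 x, (hdt2 t).deriv, hspatial t 4 (by norm_num)]
    rw [huε t x, phi'_val0 ⟨hε0, hε1⟩ (habs _)]
    ring
  · -- boundary conditions
    intro t _
    rw [hspatial t 2 (by norm_num), hspatial t 3 (by norm_num)]
    exact ⟨rfl, rfl, rfl, rfl⟩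
  · -- initial conditions
    intro x _
    constructor
    · rw [huε]; simp
    · rw [hderiv1 x]; simp
  · -- energy
    intro t _
    have hint : ∀ x : ℝ,
        (((deriv (fun τ => uε τ x) t) ^ 2 + (iteratedDeriv 2 (fun y => uε t y) x) ^ 2) / 2
          + PhiEps ε (uε t x)) = (2-ε) * (1-ε)^2 / 2 := by
      intro x
      rw [hderiv1 x, hspatial t 2 (by norm_num), huε t x,
        phi_eq0 ⟨hε0, hε1⟩ _ (abs_le.1 (habs _))]
      have hs2 := Real.sin_sq_add_cos_sq (Real.sqrt (2-ε) * t)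
      linear_combination ((1-ε)^2 * Real.sin (Real.sqrt (2-ε) * t)^2 / 2) * hsq
        + ((2-ε)*(1-ε)^2/2) * hs2
    simp only [hint]
    rw [intervalIntegral.integral_const]
    simp only [smul_eq_mul, sub_zero]
    ring
end

section
/- Loss of smoothness at the attachment–detachment transition: Let L > 0 and set t* = π/(4√2). Define u : [0,∞)×[0,L] → ℝ by u(t,x) = √2·sin(√2·t) for 0 ≤ t ≤ t* and u(t,x) = √2·t + 1 − π/4 for t ≥ t*. Then for every x ∈ [0,L] the map t ↦ u(t,x) is continuously differentiable on [0,∞) with u(t*,x) = 1 and ∂_t u(t*,x) = √2, but it is not twice differentiable at t = t*: the one-sided limits of the second time derivative satisfy lim_{t→t*⁻} ∂²_t u(t,x) = −2 and lim_{t→t*⁺} ∂²_t u(t,x) = 0. In particular u ∈ C¹([0,∞)×[0,L]) but u ∉ C²([0,∞)×[0,L]). -/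
open MeasureTheory Filter Set intervalIntegral Real

noncomputable def LS.ts : ℝ := π / (4 * Real.sqrt 2)
noncomputable def LS.f (t : ℝ) : ℝ :=
  if t ≤ LS.ts then Real.sqrt 2 * Real.sin (Real.sqrt 2 * t) else Real.sqrt 2 * t + 1 - π / 4
noncomputable def LS.d (t : ℝ) : ℝ := 2 * Real.cos (Real.sqrt 2 * min t LS.ts)

namespace LS

lemma sqrt2_pos : (0:ℝ) < Real.sqrt 2 := Real.sqrt_pos.2 (by norm_num)

lemma ts_pos : 0 < ts := div_pos Real.pi_pos (by positivity)

lemma s_mul_ts : Real.sqrt 2 * ts = π / 4 := by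
  have h : Real.sqrt 2 ≠ 0 := ne_of_gt sqrt2_pos
  rw [ts]; field_simp

lemma cos_ts : Real.cos (Real.sqrt 2 * ts) = Real.sqrt 2 / 2 := by
  rw [s_mul_ts, Real.cos_pi_div_four]

lemma sin_ts : Real.sin (Real.sqrt 2 * ts) = Real.sqrt 2 / 2 := by
  rw [s_mul_ts, Real.sin_pi_div_four]

lemma sq2 : Real.sqrt 2 * Real.sqrt 2 = 2 := Real.mul_self_sqrt (by norm_num)

lemma f_ts : f ts = 1 := by
  rw [f, if_pos le_rfl, sin_ts]
  rw [show Real.sqrt 2 * (Real.sqrt 2 / 2) = Real.sqrt 2 * Real.sqrt 2 / 2 by ring, sq2]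
  norm_num

lemma d_ts : d ts = Real.sqrt 2 := by
  rw [d, min_self, cos_ts]; ring

/-- derivative of the sine part -/
lemma hg (t : ℝ) :
    HasDerivAt (fun t => Real.sqrt 2 * Real.sin (Real.sqrt 2 * t))
      (2 * Real.cos (Real.sqrt 2 * t)) t := by
  have h1 : HasDerivAt (fun t : ℝ => Real.sqrt 2 * t) (Real.sqrt 2) t := by
    simpa using (hasDerivAt_id t).const_mul (Real.sqrt 2)
  have h2 := (Real.hasDerivAt_sin (Real.sqrt 2 * t)).comp t h1
  have h3 := h2.const_mul (Real.sqrt 2)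
  refine h3.congr_deriv ?_
  rw [show Real.sqrt 2 * (Real.cos (Real.sqrt 2 * t) * Real.sqrt 2)
      = (Real.sqrt 2 * Real.sqrt 2) * Real.cos (Real.sqrt 2 * t) by ring, sq2]

/-- derivative of the line part -/
lemma hl (t : ℝ) :
    HasDerivAt (fun t : ℝ => Real.sqrt 2 * t + 1 - π / 4) (Real.sqrt 2) t := by
  have h1 : HasDerivAt (fun t : ℝ => Real.sqrt 2 * t) (Real.sqrt 2) t := by
    simpa using (hasDerivAt_id t).const_mul (Real.sqrt 2)
  simpa using (h1.add_const 1).sub_const (π / 4)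

lemma line_ts : Real.sqrt 2 * ts + 1 - π / 4 = 1 := by rw [s_mul_ts]; ring

lemma hf (t : ℝ) : HasDerivAt f (d t) t := by
  rcases lt_trichotomy t ts with h | h | h
  · have he : f =ᶠ[nhds t] fun t => Real.sqrt 2 * Real.sin (Real.sqrt 2 * t) := by
      filter_upwards [Iio_mem_nhds h] with y hy
      exact if_pos (le_of_lt hy)
    have : d t = 2 * Real.cos (Real.sqrt 2 * t) := by rw [d, min_eq_left (le_of_lt h)]
    rw [this]
    exact (hg t).congr_of_eventuallyEq he
  · subst h
    have hleft : HasDerivWithinAt f (d ts) (Iic ts) ts := by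
      rw [d_ts]
      refine HasDerivWithinAt.congr ((hg ts).hasDerivWithinAt.congr_deriv ?_) ?_ ?_
      · rw [cos_ts]; ring
      · intro y hy; exact if_pos hy
      · exact if_pos le_rfl
    have hright : HasDerivWithinAt f (d ts) (Ici ts) ts := by
      rw [d_ts]
      refine HasDerivWithinAt.congr (hl ts).hasDerivWithinAt ?_ ?_
      · intro y hy
        rcases eq_or_lt_of_le (mem_Ici.1 hy) with rfl | hlt
        · rw [f_ts, line_ts]
        · rw [f, if_neg (not_le.2 hlt)]
      · rw [f_ts, line_ts]
    have h3 := hleft.union hright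
    rwa [Iic_union_Ici, hasDerivWithinAt_univ] at h3
  · have he : f =ᶠ[nhds t] fun t => Real.sqrt 2 * t + 1 - π / 4 := by
      filter_upwards [Ioi_mem_nhds h] with y hy
      exact if_neg (not_le.2 hy)
    have hd : d t = Real.sqrt 2 := by rw [d, min_eq_right (le_of_lt h), cos_ts]; ring
    rw [hd]
    exact (hl t).congr_of_eventuallyEq he

lemma deriv_f : deriv f = d := funext fun t => (hf t).deriv

lemma cont_d : Continuous d := by
  apply continuous_const.mul
  exact Real.continuous_cos.comp (continuous_const.mul (continuous_id.min continuous_const))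

lemma contDiff_f : ContDiff ℝ 1 f :=
  contDiff_one_iff_deriv.2 ⟨fun t => (hf t).differentiableAt, deriv_f ▸ cont_d⟩

/-- d agrees with 2cos(√2·) on Iic ts -/
lemma d_left : HasDerivWithinAt d (-2) (Iic ts) ts := by
  have hh : HasDerivAt (fun t => 2 * Real.cos (Real.sqrt 2 * t))
      (2 * (-Real.sin (Real.sqrt 2 * ts) * Real.sqrt 2)) ts := by
    have h1 : HasDerivAt (fun t : ℝ => Real.sqrt 2 * t) (Real.sqrt 2) ts := by
      simpa using (hasDerivAt_id ts).const_mul (Real.sqrt 2)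
    exact ((Real.hasDerivAt_cos (Real.sqrt 2 * ts)).comp ts h1).const_mul 2
  have hval : 2 * (-Real.sin (Real.sqrt 2 * ts) * Real.sqrt 2) = -2 := by
    rw [sin_ts]
    rw [show (2:ℝ) * (-(Real.sqrt 2 / 2) * Real.sqrt 2) = -(Real.sqrt 2 * Real.sqrt 2) by ring,
      sq2]
  refine HasDerivWithinAt.congr (hval ▸ hh.hasDerivWithinAt) ?_ ?_
  · intro y hy; rw [d, min_eq_left hy]
  · rw [d, min_self]

lemma d_right : HasDerivWithinAt d 0 (Ici ts) ts := by
  refine HasDerivWithinAt.congr (hasDerivWithinAt_const ts _ (Real.sqrt 2)) ?_ ?_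
  · intro y hy; rw [d, min_eq_right hy, cos_ts]; ring
  · rw [d_ts]

lemma not_diff_d : ¬ DifferentiableAt ℝ d ts := by
  intro hdiff
  have h := hdiff.hasDerivAt
  have h1 : (-2 : ℝ) = deriv d ts :=
    (uniqueDiffOn_Iic ts ts self_mem_Iic).eq_deriv _ d_left h.hasDerivWithinAt
  have h2 : (0 : ℝ) = deriv d ts :=
    (uniqueDiffOn_Ici ts ts self_mem_Ici).eq_deriv _ d_right h.hasDerivWithinAt
  rw [← h2] at h1
  norm_num at h1

lemma tendsto_left : Tendsto (deriv d) (nhdsWithin ts (Iio ts)) (nhds (-2)) := by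
  have heq : ∀ t ∈ Iio ts, deriv d t = 2 * (-Real.sin (Real.sqrt 2 * t) * Real.sqrt 2) := by
    intro t ht
    have hh : HasDerivAt (fun t => 2 * Real.cos (Real.sqrt 2 * t))
        (2 * (-Real.sin (Real.sqrt 2 * t) * Real.sqrt 2)) t := by
      have h1 : HasDerivAt (fun t : ℝ => Real.sqrt 2 * t) (Real.sqrt 2) t := by
        simpa using (hasDerivAt_id t).const_mul (Real.sqrt 2)
      exact ((Real.hasDerivAt_cos (Real.sqrt 2 * t)).comp t h1).const_mul 2
    have he : d =ᶠ[nhds t] fun t => 2 * Real.cos (Real.sqrt 2 * t) := by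
      filter_upwards [Iio_mem_nhds ht] with y hy
      rw [d, min_eq_left (le_of_lt hy)]
    exact (hh.congr_of_eventuallyEq he).deriv
  have hc : Tendsto (fun t => 2 * (-Real.sin (Real.sqrt 2 * t) * Real.sqrt 2))
      (nhdsWithin ts (Iio ts)) (nhds (-2)) := by
    have hcont : Continuous (fun t => 2 * (-Real.sin (Real.sqrt 2 * t) * Real.sqrt 2)) := by
      continuity
    have this2 : Tendsto (fun t => 2 * (-Real.sin (Real.sqrt 2 * t) * Real.sqrt 2))
        (nhdsWithin ts (Iio ts)) (nhds (2 * (-Real.sin (Real.sqrt 2 * ts) * Real.sqrt 2))) :=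
      (hcont.tendsto ts).mono_left nhdsWithin_le_nhds
    have hval : 2 * (-Real.sin (Real.sqrt 2 * ts) * Real.sqrt 2) = -2 := by
      rw [sin_ts]
      rw [show (2:ℝ) * (-(Real.sqrt 2 / 2) * Real.sqrt 2) = -(Real.sqrt 2 * Real.sqrt 2) by ring,
        sq2]
    rwa [hval] at this2
  refine hc.congr' ?_
  filter_upwards [self_mem_nhdsWithin] with t ht
  exact (heq t ht).symm

lemma tendsto_right : Tendsto (deriv d) (nhdsWithin ts (Ioi ts)) (nhds 0) := by
  have hc : Tendsto (fun _ : ℝ => (0:ℝ)) (nhdsWithin ts (Ioi ts)) (nhds 0) := tendsto_const_nhds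
  refine hc.congr' ?_
  filter_upwards [self_mem_nhdsWithin] with t ht
  have he : d =ᶠ[nhds t] fun _ => Real.sqrt 2 := by
    filter_upwards [Ioi_mem_nhds ht] with y hy
    rw [d, min_eq_right (le_of_lt hy), cos_ts]; ring
  exact ((hasDerivAt_const t (Real.sqrt 2)).congr_of_eventuallyEq he).deriv.symm

lemma not_contDiffAt_two : ¬ ContDiffAt ℝ 2 f ts := by
  intro h
  have h2 : ContDiffAt ℝ ((1:ℕ) + 1) f ts := by exact_mod_cast h
  obtain ⟨f', ⟨v, hv, hder⟩, hf'⟩ := contDiffAt_succ_iff_hasFDerivAt.1 h2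
  have heq : deriv f =ᶠ[nhds ts] fun x => f' x 1 := by
    filter_upwards [hv] with y hy
    rw [(hder y hy).hasDerivAt.deriv]
  have hdiff : DifferentiableAt ℝ (fun x => f' x 1) ts := by
    have := (hf'.differentiableAt (by simp))
    exact this.clm_apply (differentiableAt_const _)
  have : DifferentiableAt ℝ (deriv f) ts := hdiff.congr_of_eventuallyEq heq
  rw [deriv_f] at this
  exact not_diff_d this

end LS


/-- **Loss of smoothness at the attachment–detachment transition.**
With `t* = π/(4√2)`, the function `u(t,x) = √2 sin(√2 t)` for `t ≤ t*` and
`u(t,x) = √2 t + 1 - π/4` for `t ≥ t*` is `C¹` in time on `[0,∞)` with `u(t*) = 1` and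
`∂ₜu(t*) = √2`, but is not twice differentiable at `t*`: the one-sided limits of `∂ₜ²u`
at `t*` are `-2` (from the left) and `0` (from the right).  In particular
`u ∈ C¹([0,∞) × [0,L])` but `u ∉ C²([0,∞) × [0,L])`. -/
theorem loss_of_smoothness
    (L : ℝ) (hL : 0 < L)
    (u : ℝ → ℝ → ℝ)
    (hu : ∀ t x, u t x =
      if t ≤ π / (4 * Real.sqrt 2) then Real.sqrt 2 * Real.sin (Real.sqrt 2 * t)
      else Real.sqrt 2 * t + 1 - π / 4) :
    (∀ x ∈ Icc 0 L,
      -- t ↦ u(t,x) is continuously differentiable on [0,∞)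
      (∀ t ∈ Ici (0:ℝ), HasDerivAt (fun τ => u τ x) (deriv (fun τ => u τ x) t) t) ∧
      ContinuousOn (deriv (fun τ => u τ x)) (Ici 0) ∧
      -- value and derivative at the transition time t* = π/(4√2)
      u (π / (4 * Real.sqrt 2)) x = 1 ∧
      deriv (fun τ => u τ x) (π / (4 * Real.sqrt 2)) = Real.sqrt 2 ∧
      -- t ↦ u(t,x) is not twice differentiable at t*
      ¬ DifferentiableAt ℝ (deriv (fun τ => u τ x)) (π / (4 * Real.sqrt 2)) ∧
      -- one-sided limits of the second time derivative at t*
      Tendsto (deriv (deriv (fun τ => u τ x)))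
        (nhdsWithin (π / (4 * Real.sqrt 2)) (Iio (π / (4 * Real.sqrt 2)))) (nhds (-2)) ∧
      Tendsto (deriv (deriv (fun τ => u τ x)))
        (nhdsWithin (π / (4 * Real.sqrt 2)) (Ioi (π / (4 * Real.sqrt 2)))) (nhds 0)) ∧
    -- u is C¹ but not C² on [0,∞) × [0,L]
    ContDiffOn ℝ 1 (fun p : ℝ × ℝ => u p.1 p.2) (Ici 0 ×ˢ Icc 0 L) ∧
    ¬ ContDiffOn ℝ 2 (fun p : ℝ × ℝ => u p.1 p.2) (Ici 0 ×ˢ Icc 0 L) := by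
  have hfun : ∀ x, (fun τ => u τ x) = LS.f := by
    intro x; funext t; rw [hu]; rfl
  have hF : (fun p : ℝ × ℝ => u p.1 p.2) = fun p => LS.f p.1 := by
    funext p; rw [hu]; rfl
  refine ⟨?_, ?_, ?_⟩
  · intro x _hx
    rw [hfun x]
    refine ⟨fun t _ht => LS.deriv_f ▸ LS.hf t, ?_, ?_, ?_, ?_, ?_, ?_⟩
    · rw [LS.deriv_f]; exact LS.cont_d.continuousOn
    · rw [hu, if_pos le_rfl]
      have := LS.f_ts
      rwa [LS.f, if_pos le_rfl] at this
    · rw [LS.deriv_f]; exact LS.d_ts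
    · rw [LS.deriv_f]; exact LS.not_diff_d
    · rw [LS.deriv_f]; exact LS.tendsto_left
    · rw [LS.deriv_f]; exact LS.tendsto_right
  · rw [hF]
    exact (LS.contDiff_f.comp contDiff_fst).contDiffOn
  · intro h
    rw [hF] at h
    have hmem : (Ici (0:ℝ) ×ˢ Icc (0:ℝ) L) ∈ nhds ((LS.ts, L/2) : ℝ × ℝ) :=
      prod_mem_nhds (Ici_mem_nhds LS.ts_pos)
        (Icc_mem_nhds (by linarith) (by linarith))
    have hCA := h.contDiffAt hmem
    have hcomp : ContDiffAt ℝ 2 LS.f LS.ts :=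
      by have := hCA.comp LS.ts (ContDiffAt.prodMk (contDiffAt_id (𝕜 := ℝ) (x := LS.ts))
            (contDiffAt_const (c := L/2))); exact this
    exact LS.not_contDiffAt_two hcomp
end
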